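/- arXiv:2405.04137 — 3 statements merged into one kernel-verified Lean document; each statement's English description precedes it below -/
import Mathlib

section
/- Fusion procedure for n = 3: the operator (1/3!) R_{12}(h) R_{13}(2h) R_{23}(h) on (ℂ^N)^{⊗3} equals the antisymmetrizer E_{[3]} = (1/6) Σ_{p ∈ S₃} sgn(p) · p, where S₃ acts on (ℂ^N)^{⊗3} by permuting tensor factors. (This is the evaluation of R_{[3]}(u₁, u₂, u₃) = (1/3!) R_{12}(u₁-u₂) R_{13}(u₁-u₃) R_{23}(u₂-u₃) at u₁ = 0, u₂ = -h, u₃ = -2h.) -/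
open Matrix

noncomputable section

/-- Flip of factors 1,2 on `(ℂ^N)^{⊗3}`. -/
def P12 (N : ℕ) : Matrix (Fin N × Fin N × Fin N) (Fin N × Fin N × Fin N) ℂ :=
  fun p q => if p.1 = q.2.1 ∧ p.2.1 = q.1 ∧ p.2.2 = q.2.2 then 1 else 0

/-- Flip of factors 1,3 on `(ℂ^N)^{⊗3}`. -/
def P13 (N : ℕ) : Matrix (Fin N × Fin N × Fin N) (Fin N × Fin N × Fin N) ℂ :=
  fun p q => if p.1 = q.2.2 ∧ p.2.1 = q.2.1 ∧ p.2.2 = q.1 then 1 else 0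

/-- Flip of factors 2,3 on `(ℂ^N)^{⊗3}`. -/
def P23 (N : ℕ) : Matrix (Fin N × Fin N × Fin N) (Fin N × Fin N × Fin N) ℂ :=
  fun p q => if p.1 = q.1 ∧ p.2.1 = q.2.2 ∧ p.2.2 = q.2.1 then 1 else 0

def R12 (N : ℕ) (h u : ℂ) : Matrix (Fin N × Fin N × Fin N) (Fin N × Fin N × Fin N) ℂ :=
  1 - (h / u) • P12 N

def R13 (N : ℕ) (h u : ℂ) : Matrix (Fin N × Fin N × Fin N) (Fin N × Fin N × Fin N) ℂ :=
  1 - (h / u) • P13 N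

def R23 (N : ℕ) (h u : ℂ) : Matrix (Fin N × Fin N × Fin N) (Fin N × Fin N × Fin N) ℂ :=
  1 - (h / u) • P23 N

/-- The antisymmetrizer `E_{[3]} = (1/6) Σ_{p ∈ S₃} sgn(p) p` on `(ℂ^N)^{⊗3}`,
written out via the flips: the three transpositions have sign `-1` and the two
3-cycles `P₁₂P₁₃`, `P₁₃P₁₂` have sign `+1`. -/
def antisym3 (N : ℕ) : Matrix (Fin N × Fin N × Fin N) (Fin N × Fin N × Fin N) ℂ :=
  (6⁻¹ : ℂ) • (1 - P12 N - P13 N - P23 N + P12 N * P13 N + P13 N * P12 N)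


def mP (N : ℕ) (σ : (Fin N × Fin N × Fin N) → (Fin N × Fin N × Fin N)) :
    Matrix (Fin N × Fin N × Fin N) (Fin N × Fin N × Fin N) ℂ :=
  fun p q => if q = σ p then 1 else 0

lemma mP_mul (N : ℕ) (σ τ : (Fin N × Fin N × Fin N) → (Fin N × Fin N × Fin N)) :
    mP N σ * mP N τ = mP N (τ ∘ σ) := by
  ext p q
  have key : ∀ x, (if q = τ x then if x = σ p then (1:ℂ) else 0 else 0)
      = if x = σ p then (if q = τ x then 1 else 0) else 0 := by
    intro x; split_ifs <;> simp_all
  simp [mP, Matrix.mul_apply, ite_mul, key, Finset.sum_ite_eq, Finset.sum_ite_eq']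

lemma P12_eq (N : ℕ) : P12 N = mP N (fun p => (p.2.1, p.1, p.2.2)) := by
  ext p q; simp only [P12, mP, Prod.ext_iff]; exact if_congr (by tauto) rfl rfl

lemma P13_eq (N : ℕ) : P13 N = mP N (fun p => (p.2.2, p.2.1, p.1)) := by
  ext p q; simp only [P13, mP, Prod.ext_iff]; exact if_congr (by tauto) rfl rfl

lemma P23_eq (N : ℕ) : P23 N = mP N (fun p => (p.1, p.2.2, p.2.1)) := by
  ext p q; simp only [P23, mP, Prod.ext_iff]; exact if_congr (by tauto) rfl rfl

/-- Fusion procedure for `n = 3`: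
`(1/3!) R₁₂(h) R₁₃(2h) R₂₃(h) = E_{[3]}`, which is the evaluation of
`R_{[3]}(u₁,u₂,u₃)` at `u₁ = 0, u₂ = -h, u₃ = -2h`. -/
theorem fusion_n_three (N : ℕ) (hN : 2 ≤ N) (h : ℂ) (hh : h ≠ 0) :
    (6⁻¹ : ℂ) • (R12 N h h * R13 N h (2 * h) * R23 N h h) = antisym3 N := by
  have h1 : R12 N h h = 1 - P12 N := by rw [R12, div_self hh, one_smul]
  have h2 : R13 N h (2 * h) = 1 - (2⁻¹ : ℂ) • P13 N := by
    rw [R13]; congr 2; field_simp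
  have h3 : R23 N h h = 1 - P23 N := by rw [R23, div_self hh, one_smul]
  have hBC : P13 N * P23 N = P12 N * P13 N := by
    rw [P12_eq, P13_eq, P23_eq, mP_mul, mP_mul]; rfl
  have hAC : P12 N * P23 N = P13 N * P12 N := by
    rw [P12_eq, P13_eq, P23_eq, mP_mul, mP_mul]; rfl
  have hABC : P12 N * P13 N * P23 N = P13 N := by
    rw [P12_eq, P13_eq, P23_eq, mP_mul, mP_mul]; rfl
  rw [h1, h2, h3, antisym3]
  congr 1
  simp only [mul_sub, sub_mul, mul_one, one_mul, mul_smul_comm, smul_mul_assoc,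
    hBC, hAC, hABC]
  module

end
end

section
/- Abstract unitarity for the ZZ-type R-matrix: let A be an associative unital algebra over ℂ(u, h) containing elements P, Q with P² = 1, Q² = N·Q, and PQ = QP = ε·Q, where ε = ±1 and N is a scalar. Set κ = N/2 - ε and R(u) = 1 - (h/u) P + (h/(u - hκ)) Q. Then R(u) R(-u) = (1 - h²/u²)·1. -/
/-- Abstract unitarity for the ZZ-type R-matrix: in an associative unital algebra `A`
over a field `K` (playing the role of `ℂ(u,h)`), with `P² = 1`, `Q² = N·Q`,
`PQ = QP = ε·Q` (ε = ±1), `κ = N/2 - ε` and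
`R(u) = 1 - (h/u)P + (h/(u - hκ))Q`, one has `R(u) R(-u) = (1 - h²/u²)·1`. -/
theorem ZZ_R_matrix_abstract_unitarity {K : Type*} [Field K] [CharZero K]
    {A : Type*} [Ring A] [Algebra K A]
    (u h N ε : K) (hε : ε = 1 ∨ ε = -1) (P Q : A)
    (hP : P * P = 1) (hQ : Q * Q = N • Q)
    (hPQ : P * Q = ε • Q) (hQP : Q * P = ε • Q)
    (hu : u ≠ 0)
    (hden1 : u - h * (N / 2 - ε) ≠ 0) (hden2 : -u - h * (N / 2 - ε) ≠ 0) :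
    ((1 : A) - (h / u) • P + (h / (u - h * (N / 2 - ε))) • Q) *
      ((1 : A) + (h / u) • P + (h / (-u - h * (N / 2 - ε))) • Q)
      = (1 - h ^ 2 / u ^ 2) • (1 : A) := by
  have m1 : u * 2 - h * (N - 2 * ε) ≠ 0 := fun c => hden1 (by linear_combination c / 2)
  have m2 : -(u * 2) - h * (N - 2 * ε) ≠ 0 := fun c => hden2 (by linear_combination c / 2)
  have key : h / (u - h * (N / 2 - ε)) + h / (-u - h * (N / 2 - ε))
      - (h / u) * (h / (-u - h * (N / 2 - ε))) * ε
      + (h / u) * (h / (u - h * (N / 2 - ε))) * ε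
      + (h / (u - h * (N / 2 - ε))) * (h / (-u - h * (N / 2 - ε))) * N = 0 := by
    field_simp [m1, m2]
    ring
  simp only [sub_mul, add_mul, mul_add, one_mul, mul_one, smul_mul_smul_comm, smul_smul,
    smul_mul_assoc, mul_smul_comm, hP, hQ, hPQ, hQP]
  match_scalars
  all_goals first
    | (field_simp; try ring)
    | linear_combination key
end

section
/- If a matrix T(u) = Σ e_{ij} ⊗ t_{ij}(u) with entries in an associative algebra of formal series satisfies the RTT relation R(u - v) T₁(u) T₂(v) = T₂(v) T₁(u) R(u - v) for the Yang R-matrix R(u) = I - (h/u) P, and T(u) is invertible, then B(u) = T(u) T(-u)^{-1} satisfies the reflection equation R(u - v) B₁(u) R(u + v) B₂(v) = B₂(v) R(u + v) B₁(u) R(u - v), and the unitarity condition B(u) B(-u) = 1. -/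
open Matrix

noncomputable section

variable {A : Type*} [Ring A] [Algebra ℂ A]

/-- The flip operator with entries in `A`. -/
def flipPA (N : ℕ) (A : Type*) [Ring A] [Algebra ℂ A] :
    Matrix (Fin N × Fin N) (Fin N × Fin N) A :=
  fun p q => if p.1 = q.2 ∧ p.2 = q.1 then 1 else 0

/-- The Yang R-matrix `R(u) = I - (h/u) P`, with (scalar) entries viewed in `A`. -/
def yangRA (N : ℕ) (A : Type*) [Ring A] [Algebra ℂ A] (h u : ℂ) :
    Matrix (Fin N × Fin N) (Fin N × Fin N) A :=
  1 - (h / u) • flipPA N A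

/-- `T₁(u) = T(u) ⊗ 1` acting on the first auxiliary factor. -/
def emb1 {N : ℕ} (M : Matrix (Fin N) (Fin N) A) :
    Matrix (Fin N × Fin N) (Fin N × Fin N) A :=
  fun p q => if p.2 = q.2 then M p.1 q.1 else 0

/-- `T₂(v) = 1 ⊗ T(v)` acting on the second auxiliary factor. -/
def emb2 {N : ℕ} (M : Matrix (Fin N) (Fin N) A) :
    Matrix (Fin N × Fin N) (Fin N × Fin N) A :=
  fun p q => if p.1 = q.1 then M p.2 q.2 else 0

/- ### Auxiliary lemmas -/

lemma emb1_mul {N : ℕ} (M M' : Matrix (Fin N) (Fin N) A) :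
    emb1 (M * M') = emb1 M * emb1 M' := by
  ext ⟨i, j⟩ ⟨k, l⟩
  simp only [emb1, Matrix.mul_apply, Fintype.sum_prod_type, ite_mul, mul_ite, zero_mul,
    mul_zero]
  by_cases hjl : j = l <;> simp [hjl]

lemma emb2_mul {N : ℕ} (M M' : Matrix (Fin N) (Fin N) A) :
    emb2 (M * M') = emb2 M * emb2 M' := by
  ext ⟨i, j⟩ ⟨k, l⟩
  simp only [emb2, Matrix.mul_apply, Fintype.sum_prod_type, ite_mul, mul_ite, zero_mul,
    mul_zero]
  by_cases hik : i = k <;> simp [hik]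

lemma emb1_one {N : ℕ} : emb1 (1 : Matrix (Fin N) (Fin N) A) = 1 := by
  ext ⟨i, j⟩ ⟨k, l⟩
  simp only [emb1, Matrix.one_apply, Prod.mk.injEq]
  by_cases hjl : j = l <;> by_cases hik : i = k <;> simp [hjl, hik]

lemma emb2_one {N : ℕ} : emb2 (1 : Matrix (Fin N) (Fin N) A) = 1 := by
  ext ⟨i, j⟩ ⟨k, l⟩
  simp only [emb2, Matrix.one_apply, Prod.mk.injEq]
  by_cases hjl : j = l <;> by_cases hik : i = k <;> simp [hjl, hik]

lemma flipPA_mul {N : ℕ} (X : Matrix (Fin N × Fin N) (Fin N × Fin N) A) :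
    flipPA N A * X = X.submatrix Prod.swap id := by
  ext p q
  rw [Matrix.mul_apply, Finset.sum_eq_single (p.2, p.1)]
  · simp [flipPA, Prod.swap]
  · intro r _ hr
    have : ¬(p.1 = r.2 ∧ p.2 = r.1) := by
      rintro ⟨h1, h2⟩
      exact hr (by ext <;> simp [h1.symm, h2.symm])
    simp [flipPA, this]
  · intro hmem
    exact absurd (Finset.mem_univ _) hmem

lemma mul_flipPA {N : ℕ} (X : Matrix (Fin N × Fin N) (Fin N × Fin N) A) :
    X * flipPA N A = X.submatrix id Prod.swap := by
  ext p q
  rw [Matrix.mul_apply, Finset.sum_eq_single (q.2, q.1)]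
  · simp [flipPA, Prod.swap]
  · intro r _ hr
    have : ¬(r.1 = q.2 ∧ r.2 = q.1) := by
      rintro ⟨h1, h2⟩
      exact hr (by ext <;> simp [h1, h2])
    simp [flipPA, this]
  · intro hmem
    exact absurd (Finset.mem_univ _) hmem

lemma flipPA_flipPA {N : ℕ} : flipPA N A * flipPA N A = 1 := by
  rw [flipPA_mul]
  ext p q
  simp [flipPA, Matrix.one_apply, Matrix.submatrix_apply, Prod.ext_iff, and_comm]

lemma flipPA_emb1 {N : ℕ} (M : Matrix (Fin N) (Fin N) A) :
    flipPA N A * emb1 M = emb2 M * flipPA N A := by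
  rw [flipPA_mul, mul_flipPA]
  ext p q
  simp [emb1, emb2, Matrix.submatrix_apply]

lemma flipPA_emb2 {N : ℕ} (M : Matrix (Fin N) (Fin N) A) :
    flipPA N A * emb2 M = emb1 M * flipPA N A := by
  rw [flipPA_mul, mul_flipPA]
  ext p q
  simp [emb1, emb2, Matrix.submatrix_apply]

lemma flipPA_yang {N : ℕ} (h w : ℂ) :
    flipPA N A * yangRA N A h w = yangRA N A h w * flipPA N A := by
  simp [yangRA, mul_sub, sub_mul, mul_smul_comm, smul_mul_assoc]

lemma yang_comm {N : ℕ} (h w₁ w₂ : ℂ) :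
    yangRA N A h w₁ * yangRA N A h w₂ = yangRA N A h w₂ * yangRA N A h w₁ := by
  simp only [yangRA, mul_sub, sub_mul, mul_one, one_mul, mul_smul_comm, smul_mul_assoc,
    flipPA_flipPA, smul_sub, smul_smul]
  rw [mul_comm (h / w₁) (h / w₂)]
  abel

/-- A conjugation-moving lemma: if `X * a = a * Y` and `b` is a two-sided inverse of `a`,
then `b * X = Y * b`. -/
lemma conj_comm_of_inv {M : Type*} [Monoid M] {a b X Y : M}
    (hab : a * b = 1) (hba : b * a = 1) (h : X * a = a * Y) : b * X = Y * b := by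
  calc b * X = b * X * (a * b) := by rw [hab, mul_one]
    _ = b * (X * a) * b := by simp only [mul_assoc]
    _ = b * (a * Y) * b := by rw [h]
    _ = (b * a) * (Y * b) := by simp only [mul_assoc]
    _ = Y * b := by rw [hba, one_mul]

lemma mul_ctx3 {M : Type*} [Semigroup M] {a b c d e f : M} (h : a * b * c = d * e * f)
    (x : M) : a * (b * (c * x)) = d * (e * (f * x)) := by
  rw [← mul_assoc, ← mul_assoc, h, mul_assoc, mul_assoc]

lemma mul_ctx2 {M : Type*} [Semigroup M] {a b c d : M} (h : a * b = c * d)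
    (x : M) : a * (b * x) = c * (d * x) := by
  rw [← mul_assoc, h, mul_assoc]

/-- If an invertible matrix `T(u)` with entries in an associative algebra satisfies the
RTT relation for the Yang R-matrix, then `B(u) = T(u) T(-u)⁻¹` satisfies the reflection
equation `R(u-v) B₁(u) R(u+v) B₂(v) = B₂(v) R(u+v) B₁(u) R(u-v)`, and the unitarity
condition `B(u) B(-u) = 1`. -/
theorem RTT_implies_reflection (N : ℕ) (hN : 2 ≤ N) (h : ℂ)
    (T Tinv : ℂ → Matrix (Fin N) (Fin N) A)
    (hT : ∀ u, T u * Tinv u = 1 ∧ Tinv u * T u = 1)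
    (hRTT : ∀ u v : ℂ, u - v ≠ 0 →
      yangRA N A h (u - v) * emb1 (T u) * emb2 (T v)
        = emb2 (T v) * emb1 (T u) * yangRA N A h (u - v)) :
    (∀ u v : ℂ, u - v ≠ 0 → u + v ≠ 0 →
      yangRA N A h (u - v) * emb1 (T u * Tinv (-u)) * yangRA N A h (u + v) *
          emb2 (T v * Tinv (-v))
        = emb2 (T v * Tinv (-v)) * yangRA N A h (u + v) * emb1 (T u * Tinv (-u)) *
          yangRA N A h (u - v)) ∧
    (∀ u : ℂ, (T u * Tinv (-u)) * (T (-u) * Tinv u) = 1) := by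
  -- the "swapped" RTT relation, obtained by conjugating with the flip operator
  have hRTT' : ∀ a b : ℂ, a - b ≠ 0 →
      yangRA N A h (a - b) * emb2 (T a) * emb1 (T b)
        = emb1 (T b) * emb2 (T a) * yangRA N A h (a - b) := by
    intro a b hab
    have key := hRTT a b hab
    set P := flipPA N A
    set R := yangRA N A h (a - b)
    have hPP : P * P = 1 := flipPA_flipPA
    have e1 : ∀ M : Matrix (Fin N) (Fin N) A, ∀ x, P * (emb1 M * x) = emb2 M * (P * x) :=
      fun M x => mul_ctx2 (flipPA_emb1 M) x
    have e2 : ∀ M : Matrix (Fin N) (Fin N) A, ∀ x, P * (emb2 M * x) = emb1 M * (P * x) :=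
      fun M x => mul_ctx2 (flipPA_emb2 M) x
    have eR : ∀ x, P * (R * x) = R * (P * x) := fun x => mul_ctx2 (flipPA_yang h (a - b)) x
    have key2 : P * (R * (emb1 (T a) * (emb2 (T b) * P)))
        = P * (emb2 (T b) * (emb1 (T a) * (R * P))) := by
      have := congrArg (fun X => P * X * P) key
      simpa only [mul_assoc] using this
    rw [eR, e1, e2, e2, e1, eR] at key2
    simp only [← mul_assoc] at key2
    rw [mul_assoc _ P P, hPP, mul_one, mul_assoc _ P P, hPP, mul_one] at key2
    exact key2
  constructor
  · intro u v huv huv'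
    -- abbreviations
    set R1 := yangRA N A h (u - v) with hR1
    set R2 := yangRA N A h (u + v) with hR2
    set t1u := emb1 (T u)
    set t2v := emb2 (T v)
    set t1mu := emb1 (T (-u))
    set t2mv := emb2 (T (-v))
    set s1mu := emb1 (Tinv (-u))
    set s2mv := emb2 (Tinv (-v))
    have h1 : t1mu * s1mu = 1 := by
      rw [show t1mu * s1mu = emb1 (T (-u) * Tinv (-u)) from (emb1_mul _ _).symm,
        (hT (-u)).1, emb1_one]
    have h1' : s1mu * t1mu = 1 := by
      rw [show s1mu * t1mu = emb1 (Tinv (-u) * T (-u)) from (emb1_mul _ _).symm,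
        (hT (-u)).2, emb1_one]
    have h2 : t2mv * s2mv = 1 := by
      rw [show t2mv * s2mv = emb2 (T (-v) * Tinv (-v)) from (emb2_mul _ _).symm,
        (hT (-v)).1, emb2_one]
    have h2' : s2mv * t2mv = 1 := by
      rw [show s2mv * t2mv = emb2 (Tinv (-v) * T (-v)) from (emb2_mul _ _).symm,
        (hT (-v)).2, emb2_one]
    -- relation (A): RTT at (u, v)
    have relA : R1 * t1u * t2v = t2v * t1u * R1 := hRTT u v huv
    -- relation (B): from swapped RTT at (v, -u)
    have B0 : R2 * t2v * t1mu = t1mu * t2v * R2 := by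
      have := hRTT' v (-u) (by rwa [sub_neg_eq_add, add_comm])
      rwa [show v - (-u) = u + v by ring] at this
    have relB : s1mu * R2 * t2v = t2v * R2 * s1mu := by
      have := conj_comm_of_inv h1 h1' (by rw [← mul_assoc, B0, mul_assoc] :
        (R2 * t2v) * t1mu = t1mu * (t2v * R2))
      rw [← mul_assoc] at this
      rw [this, mul_assoc]
    -- relation (C): from RTT at (u, -v)
    have C0 : R2 * t1u * t2mv = t2mv * t1u * R2 := by
      have := hRTT u (-v) (by rwa [sub_neg_eq_add])
      rwa [show u - (-v) = u + v by ring] at this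
    have relC : s2mv * R2 * t1u = t1u * R2 * s2mv := by
      have := conj_comm_of_inv h2 h2' (by rw [← mul_assoc, C0, mul_assoc] :
        (R2 * t1u) * t2mv = t2mv * (t1u * R2))
      rw [← mul_assoc] at this
      rw [this, mul_assoc]
    -- relation (D): from swapped RTT at (-v, -u)
    have F0 : R1 * t2mv * t1mu = t1mu * t2mv * R1 := by
      have := hRTT' (-v) (-u) (by rw [show (-v) - (-u) = u - v by ring]; exact huv)
      rwa [show (-v) - (-u) = u - v by ring] at this
    have relD : R1 * s1mu * s2mv = s2mv * s1mu * R1 := by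
      have i1 : s1mu * R1 * t2mv = t2mv * R1 * s1mu := by
        have := conj_comm_of_inv h1 h1' (by rw [← mul_assoc, F0, mul_assoc] :
          (R1 * t2mv) * t1mu = t1mu * (t2mv * R1))
        rw [← mul_assoc] at this
        rw [this, mul_assoc]
      have i2 : s2mv * (s1mu * R1) = (R1 * s1mu) * s2mv := by
        refine conj_comm_of_inv h2 h2' ?_
        rw [i1, mul_assoc]
      rw [← i2, ← mul_assoc]
    -- the R-matrices commute
    have relRR : R1 * R2 = R2 * R1 := yang_comm h _ _
    -- main computation
    rw [emb1_mul, emb2_mul]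
    simp only [mul_assoc]
    rw [mul_ctx3 relB, mul_ctx3 relA, mul_ctx2 relRR,
      show R1 * (s1mu * s2mv) = s2mv * (s1mu * R1) by
        rw [← mul_assoc, relD, mul_assoc],
      mul_ctx3 relC]
  · intro u
    rw [mul_assoc, ← mul_assoc (Tinv (-u)), (hT (-u)).2, one_mul, (hT u).1]

end
end
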